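/- For the collapsed walk on the line with basis {|R,x⟩ (0≤x≤n−1), |L,x⟩ (1≤x≤n)}, the perturbed operator U' = U − 2|L,1⟩⟨R,0| satisfies ⟨ψ₀|U'|ψ₀⟩ = 1 − 1/2^{n−1}, where |ψ₀⟩ has amplitudes ⟨R,x|ψ₀⟩ = √(C(n−1,x)/2^n) and ⟨L,x|ψ₀⟩ = √(C(n−1,x−1)/2^n). -/

import Mathlib

open Matrix

/-- `cos ω_x = 1 - 2x/n`. -/
noncomputable def cosOmega (n x : ℕ) : ℝ := 1 - 2 * x / n

/-- `sin ω_x = (2/n)√(x(n-x))`. -/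
noncomputable def sinOmega (n x : ℕ) : ℝ := (2 / n) * Real.sqrt (x * ((n : ℝ) - x))

/-- The collapsed (line) walk operator, on the basis `|R,x⟩ = (false, x)`,
`|L,x⟩ = (true, x)`:
`U = Σ_x |R,x⟩(−cos ω_{x+1}⟨L,x+1| + sin ω_{x+1}⟨R,x+1|)
   + Σ_x |L,x⟩(sin ω_{x−1}⟨L,x−1| + cos ω_{x−1}⟨R,x−1|)`. -/
noncomputable def collapsedU (n : ℕ) :
    Matrix (Bool × Fin (n + 1)) (Bool × Fin (n + 1)) ℂ :=
  Matrix.of fun p q =>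
    if p.1 = false ∧ q.1 = true ∧ (q.2 : ℕ) = (p.2 : ℕ) + 1 then (-(cosOmega n q.2) : ℝ)
    else if p.1 = false ∧ q.1 = false ∧ (q.2 : ℕ) = (p.2 : ℕ) + 1 then (sinOmega n q.2 : ℝ)
    else if p.1 = true ∧ q.1 = true ∧ (q.2 : ℕ) + 1 = (p.2 : ℕ) then (sinOmega n q.2 : ℝ)
    else if p.1 = true ∧ q.1 = false ∧ (q.2 : ℕ) + 1 = (p.2 : ℕ) then (cosOmega n q.2 : ℝ)
    else 0

/-- The perturbed collapsed walk operator `U' = U − 2|L,1⟩⟨R,0|`. -/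
noncomputable def collapsedU' (n : ℕ) :
    Matrix (Bool × Fin (n + 1)) (Bool × Fin (n + 1)) ℂ :=
  collapsedU n -
    (2 : ℂ) • Matrix.of fun p q =>
      if p = (true, (1 : Fin (n + 1))) ∧ q = (false, (0 : Fin (n + 1))) then 1 else 0

/-- The collapsed uniform superposition: `⟨R,x|ψ₀⟩ = √(C(n−1,x)/2^n)` and
`⟨L,x|ψ₀⟩ = √(C(n−1,x−1)/2^n)` for `x ≥ 1`. -/
noncomputable def linePsi0 (n : ℕ) : Bool × Fin (n + 1) → ℂ :=
  fun p =>
    if p.1 = false then (Real.sqrt ((n - 1).choose p.2 / 2 ^ n) : ℝ)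
    else if (p.2 : ℕ) = 0 then 0
    else (Real.sqrt ((n - 1).choose ((p.2 : ℕ) - 1) / 2 ^ n) : ℝ)


noncomputable def pF (n k : ℕ) : ℝ := Real.sqrt ((n - 1).choose k / 2 ^ n)
noncomputable def pT (n k : ℕ) : ℝ := if k = 0 then 0 else pF n (k - 1)
noncomputable def rF (n : ℕ) : ℕ → ℝ := fun k =>
  if k < n then -(cosOmega n (k + 1)) * pT n (k + 1) + sinOmega n (k + 1) * pF n (k + 1) else 0
noncomputable def rT (n : ℕ) : ℕ → ℝ := fun k =>
  if 1 ≤ k then sinOmega n (k - 1) * pT n (k - 1) + cosOmega n (k - 1) * pF n (k - 1) else 0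


lemma helper (n j : ℕ) (hj : j + 1 ≤ n) :
    sinOmega n (j + 1) * (pF n j * pF n (j + 1))
      = 2 * (((n - 1 - j) * (n - 1).choose j : ℕ) : ℝ) / ((n : ℝ) * 2 ^ n) := by
  have h2 : ((n - 1 - j : ℕ) : ℝ) = (n : ℝ) - 1 - j := by
    have h : n - 1 - j = n - (j + 1) := by omega
    rw [h, Nat.cast_sub hj]; push_cast; ring
  have e1 : (((j : ℕ) + 1 : ℕ) : ℝ) * ((n : ℝ) - (((j : ℕ) + 1 : ℕ) : ℝ))
      = (((j + 1) * (n - 1 - j) : ℕ) : ℝ) := by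
    push_cast [h2]; ring
  have hkey : ((j + 1) * (n - 1 - j)) * ((n - 1).choose j * (n - 1).choose (j + 1))
      = ((n - 1 - j) * (n - 1).choose j) ^ 2 := by
    have h := Nat.choose_succ_right_eq (n - 1) j
    have h3 : (j + 1) * (n - 1 - j) * ((n - 1).choose j * (n - 1).choose (j + 1))
        = ((n - 1).choose (j + 1) * (j + 1)) * ((n - 1 - j) * (n - 1).choose j) := by ring
    rw [h3, h]
    ring
  unfold sinOmega pF
  rw [e1, ← Real.sqrt_mul (by positivity), mul_assoc, ← Real.sqrt_mul (by positivity)]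
  have e2 : (((j + 1) * (n - 1 - j) : ℕ) : ℝ)
        * (((n - 1).choose j : ℝ) / 2 ^ n * (((n - 1).choose (j + 1) : ℝ) / 2 ^ n))
      = ((((n - 1 - j) * (n - 1).choose j : ℕ) : ℝ) / 2 ^ n) ^ 2 := by
    have hc : ((((j + 1) * (n - 1 - j) : ℕ)) : ℝ)
          * (((n - 1).choose j : ℝ) * ((n - 1).choose (j + 1) : ℝ))
        = ((((n - 1 - j) * (n - 1).choose j : ℕ)) : ℝ) ^ 2 := by exact_mod_cast hkey
    linear_combination ((2:ℝ) ^ n)⁻¹ * ((2:ℝ) ^ n)⁻¹ * hc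
  rw [e2, Real.sqrt_sq (by positivity)]
  ring

lemma pT_succ (n j : ℕ) : pT n (j + 1) = pF n j := by simp [pT]

lemma pF_sq (n j : ℕ) : pF n j * pF n j = ((n - 1).choose j : ℝ) / 2 ^ n :=
  Real.mul_self_sqrt (by positivity)

lemma lower_helper (n j : ℕ) (hn : 1 ≤ n) (hj : j < n) :
    sinOmega n j * (pF n j * pT n j)
      = 2 * ((j * (n - 1).choose j : ℕ) : ℝ) / ((n : ℝ) * 2 ^ n) := by
  cases j with
  | zero => simp [sinOmega]
  | succ m =>
      rw [pT_succ]
      have hnat : (n - 1 - m) * (n - 1).choose m = (m + 1) * (n - 1).choose (m + 1) := by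
        have h2 := Nat.choose_succ_right_eq (n - 1) m
        calc (n - 1 - m) * (n - 1).choose m = (n - 1).choose m * (n - 1 - m) := by ring
          _ = (n - 1).choose (m + 1) * (m + 1) := h2.symm
          _ = (m + 1) * (n - 1).choose (m + 1) := by ring
      have h := helper n m (by omega)
      rw [mul_comm (pF n (m + 1)) (pF n m), h, hnat]

lemma key (n j : ℕ) (hn : 1 ≤ n) (hj : j < n) :
    pF n j * (-(cosOmega n (j + 1)) * pT n (j + 1) + sinOmega n (j + 1) * pF n (j + 1))
      + pT n (j + 1) * (sinOmega n j * pT n j + cosOmega n j * pF n j)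
      = ((n - 1).choose j : ℝ) / 2 ^ (n - 1) := by
  rw [pT_succ]
  have expand : pF n j * (-(cosOmega n (j + 1)) * pF n j + sinOmega n (j + 1) * pF n (j + 1))
      + pF n j * (sinOmega n j * pT n j + cosOmega n j * pF n j)
      = (cosOmega n j - cosOmega n (j + 1)) * (pF n j * pF n j)
        + sinOmega n (j + 1) * (pF n j * pF n (j + 1))
        + sinOmega n j * (pF n j * pT n j) := by ring
  rw [expand, pF_sq, helper n j hj, lower_helper n j hn hj]
  have hn0 : (n : ℝ) ≠ 0 := by positivity
  have hcos : cosOmega n j - cosOmega n (j + 1) = 2 / n := by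
    unfold cosOmega; push_cast; field_simp; ring
  have hsum : ((n - 1 - j : ℕ) : ℝ) = (n : ℝ) - 1 - (j : ℝ) := by
    have h : n - 1 - j = n - (j + 1) := by omega
    rw [h, Nat.cast_sub hj]; push_cast; ring
  have hpow : (2 : ℝ) ^ n = 2 * 2 ^ (n - 1) := by
    conv_lhs => rw [show n = (n - 1) + 1 by omega]
    ring
  rw [hcos]
  push_cast [hsum, hpow]
  field_simp
  ring

lemma psiF (n : ℕ) (x : Fin (n + 1)) : linePsi0 n (false, x) = ((pF n x : ℝ) : ℂ) := by
  simp [linePsi0, pF]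

lemma psiT (n : ℕ) (x : Fin (n + 1)) : linePsi0 n (true, x) = ((pT n x : ℝ) : ℂ) := by
  rcases Nat.eq_zero_or_pos (x : ℕ) with h | h
  · simp [linePsi0, pT, h]
  · have h0 : (x : ℕ) ≠ 0 := by omega
    simp [linePsi0, pT, pF, h0]


lemma rowF (n : ℕ) (x : Fin (n + 1)) :
    ∑ q, collapsedU n (false, x) q * linePsi0 n q = ((rF n (x : ℕ) : ℝ) : ℂ) := by
  rw [Fintype.sum_prod_type, Fintype.sum_bool]
  have hT : ∀ y : Fin (n + 1),
      collapsedU n (false, x) (true, y) * linePsi0 n (true, y)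
        = (if (y : ℕ) = (x : ℕ) + 1 then ((-(cosOmega n (y : ℕ)) : ℝ) : ℂ) else 0)
            * ((pT n (y : ℕ) : ℝ) : ℂ) := by
    intro y
    rw [psiT]
    simp [collapsedU]
  have hF : ∀ y : Fin (n + 1),
      collapsedU n (false, x) (false, y) * linePsi0 n (false, y)
        = (if (y : ℕ) = (x : ℕ) + 1 then ((sinOmega n (y : ℕ) : ℝ) : ℂ) else 0)
            * ((pF n (y : ℕ) : ℝ) : ℂ) := by
    intro y
    rw [psiF]
    simp [collapsedU]
  simp only [hT, hF]
  rw [Fin.sum_univ_eq_sum_range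
      (fun i => (if i = (x : ℕ) + 1 then ((-(cosOmega n i) : ℝ) : ℂ) else 0) * ((pT n i : ℝ) : ℂ)),
    Fin.sum_univ_eq_sum_range
      (fun i => (if i = (x : ℕ) + 1 then ((sinOmega n i : ℝ) : ℂ) else 0) * ((pF n i : ℝ) : ℂ))]
  simp only [ite_mul, zero_mul]
  rw [Finset.sum_ite_eq' (Finset.range (n + 1)) ((x : ℕ) + 1),
    Finset.sum_ite_eq' (Finset.range (n + 1)) ((x : ℕ) + 1)]
  simp only [Finset.mem_range]
  by_cases h : (x : ℕ) < n
  · rw [if_pos (by omega), if_pos (by omega), rF, if_pos h]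
    push_cast
    ring
  · rw [if_neg (by omega), if_neg (by omega), rF, if_neg h]
    simp

lemma rowT (n : ℕ) (x : Fin (n + 1)) :
    ∑ q, collapsedU n (true, x) q * linePsi0 n q = ((rT n (x : ℕ) : ℝ) : ℂ) := by
  rw [Fintype.sum_prod_type, Fintype.sum_bool]
  have hT : ∀ y : Fin (n + 1),
      collapsedU n (true, x) (true, y) * linePsi0 n (true, y)
        = (if (y : ℕ) + 1 = (x : ℕ) then ((sinOmega n (y : ℕ) : ℝ) : ℂ) else 0)
            * ((pT n (y : ℕ) : ℝ) : ℂ) := by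
    intro y
    rw [psiT]
    simp [collapsedU]
  have hF : ∀ y : Fin (n + 1),
      collapsedU n (true, x) (false, y) * linePsi0 n (false, y)
        = (if (y : ℕ) + 1 = (x : ℕ) then ((cosOmega n (y : ℕ) : ℝ) : ℂ) else 0)
            * ((pF n (y : ℕ) : ℝ) : ℂ) := by
    intro y
    rw [psiF]
    simp [collapsedU]
  simp only [hT, hF]
  rw [Fin.sum_univ_eq_sum_range
      (fun i => (if i + 1 = (x : ℕ) then ((sinOmega n i : ℝ) : ℂ) else 0) * ((pT n i : ℝ) : ℂ)),
    Fin.sum_univ_eq_sum_range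
      (fun i => (if i + 1 = (x : ℕ) then ((cosOmega n i : ℝ) : ℂ) else 0) * ((pF n i : ℝ) : ℂ))]
  rcases Nat.eq_zero_or_pos (x : ℕ) with h0 | h0
  · rw [rT, if_neg (by omega)]
    simp [h0]
  · obtain ⟨k, hk⟩ : ∃ k, (x : ℕ) = k + 1 := ⟨(x : ℕ) - 1, by omega⟩
    have hcond : ∀ i : ℕ, (i + 1 = (x : ℕ)) = (i = k) := by
      intro i; rw [hk]; simp [Nat.add_right_cancel_iff]
    simp only [hcond, ite_mul, zero_mul]
    rw [Finset.sum_ite_eq' (Finset.range (n + 1)) k,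
      Finset.sum_ite_eq' (Finset.range (n + 1)) k]
    have hkmem : k ∈ Finset.range (n + 1) := by
      have := x.isLt; rw [Finset.mem_range]; omega
    rw [if_pos hkmem, if_pos hkmem, rT, if_pos (by omega), hk]
    simp only [Nat.add_sub_cancel]
    push_cast
    ring

/-- `⟨ψ₀|U'|ψ₀⟩ = 1 − 1/2^{n−1}`. -/
theorem psi0_expectation (n : ℕ) (hn : 1 ≤ n) :
    star (linePsi0 n) ⬝ᵥ (collapsedU' n).mulVec (linePsi0 n)
      = 1 - 1 / 2 ^ (n - 1) := by
  rw [collapsedU', Matrix.sub_mulVec, dotProduct_sub, Matrix.smul_mulVec,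
    dotProduct_smul]
  -- perturbation term
  have hpert : star (linePsi0 n) ⬝ᵥ
      (Matrix.of fun p q : Bool × Fin (n + 1) =>
        if p = (true, (1 : Fin (n + 1))) ∧ q = (false, (0 : Fin (n + 1))) then (1 : ℂ)
        else 0).mulVec (linePsi0 n)
      = star (linePsi0 n (true, 1)) * linePsi0 n (false, 0) := by
    simp only [Matrix.mulVec, dotProduct, Matrix.of_apply, Pi.star_apply]
    have hinner : ∀ p : Bool × Fin (n + 1),
        (∑ q : Bool × Fin (n + 1),
          (if p = (true, (1 : Fin (n + 1))) ∧ q = (false, (0 : Fin (n + 1))) then (1 : ℂ)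
            else 0) * linePsi0 n q)
        = if p = (true, (1 : Fin (n + 1))) then linePsi0 n (false, 0) else 0 := by
      intro p
      by_cases hp : p = (true, (1 : Fin (n + 1)))
      · rw [if_pos hp]
        have : ∀ q : Bool × Fin (n + 1),
            (if p = (true, (1 : Fin (n + 1))) ∧ q = (false, (0 : Fin (n + 1))) then (1 : ℂ)
              else 0) * linePsi0 n q
            = if q = (false, (0 : Fin (n + 1))) then linePsi0 n q else 0 := by
          intro q
          by_cases hq : q = (false, (0 : Fin (n + 1))) <;> simp [hp, hq]
        simp only [this]
        rw [Finset.sum_ite_eq' Finset.univ ((false, (0 : Fin (n + 1)))) (linePsi0 n)]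
        simp
      · rw [if_neg hp]
        apply Finset.sum_eq_zero
        intro q _
        simp [hp]
    simp only [hinner, mul_ite, mul_zero]
    rw [Finset.sum_ite_eq' Finset.univ ((true, (1 : Fin (n + 1))))]
    simp
  rw [hpert]
  -- main term
  have hmain : star (linePsi0 n) ⬝ᵥ (collapsedU n).mulVec (linePsi0 n)
      = ((∑ i ∈ Finset.range (n + 1), pF n i * rF n i
          + ∑ i ∈ Finset.range (n + 1), pT n i * rT n i : ℝ) : ℂ) := by
    simp only [Matrix.mulVec, dotProduct, Pi.star_apply]
    rw [Fintype.sum_prod_type, Fintype.sum_bool]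
    have h1 : ∀ x : Fin (n + 1),
        star (linePsi0 n (true, x)) * (∑ q, collapsedU n (true, x) q * linePsi0 n q)
          = ((pT n (x : ℕ) * rT n (x : ℕ) : ℝ) : ℂ) := by
      intro x
      rw [rowT, psiT]
      push_cast
      rw [Complex.star_def, Complex.conj_ofReal]
    have h2 : ∀ x : Fin (n + 1),
        star (linePsi0 n (false, x)) * (∑ q, collapsedU n (false, x) q * linePsi0 n q)
          = ((pF n (x : ℕ) * rF n (x : ℕ) : ℝ) : ℂ) := by
      intro x
      rw [rowF, psiF]
      push_cast
      rw [Complex.star_def, Complex.conj_ofReal]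
    simp only [h1, h2]
    rw [Fin.sum_univ_eq_sum_range (fun i => ((pT n i * rT n i : ℝ) : ℂ)),
      Fin.sum_univ_eq_sum_range (fun i => ((pF n i * rF n i : ℝ) : ℂ))]
    push_cast
    ring
  rw [hmain, psiT, psiF]
  -- all real now
  have hval1 : ((1 : Fin (n + 1)) : ℕ) = 1 := by
    obtain ⟨m, hm⟩ : ∃ m, n = m + 1 := ⟨n - 1, by omega⟩
    subst hm
    exact Fin.val_one m
  have hval0 : ((0 : Fin (n + 1)) : ℕ) = 0 := rfl
  rw [smul_eq_mul, Complex.star_def, Complex.conj_ofReal, hval1, hval0]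
  -- reduce to a real identity
  have hreal : (∑ i ∈ Finset.range (n + 1), pF n i * rF n i
        + ∑ i ∈ Finset.range (n + 1), pT n i * rT n i : ℝ)
        - 2 * (pT n 1 * pF n 0) = 1 - 1 / 2 ^ (n - 1) := by
    have hS1 : ∑ i ∈ Finset.range (n + 1), pF n i * rF n i
        = ∑ i ∈ Finset.range n, pF n i * rF n i := by
      rw [Finset.sum_range_succ, rF]
      simp
    have hS2 : ∑ i ∈ Finset.range (n + 1), pT n i * rT n i
        = ∑ i ∈ Finset.range n, pT n (i + 1) * rT n (i + 1) := by
      rw [Finset.sum_range_succ']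
      simp [pT]
    rw [hS1, hS2, ← Finset.sum_add_distrib]
    have hsum : ∑ i ∈ Finset.range n, (pF n i * rF n i + pT n (i + 1) * rT n (i + 1))
        = ∑ i ∈ Finset.range n, ((n - 1).choose i : ℝ) / 2 ^ (n - 1) := by
      apply Finset.sum_congr rfl
      intro i hi
      rw [Finset.mem_range] at hi
      rw [rF, if_pos hi, rT, if_pos (by omega)]
      simp only [Nat.add_sub_cancel]
      exact key n i hn hi
    rw [hsum, ← Finset.sum_div]
    have hch : ∑ i ∈ Finset.range n, ((n - 1).choose i : ℝ) = 2 ^ (n - 1) := by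
      have hc := Nat.sum_range_choose (n - 1)
      rw [show n - 1 + 1 = n by omega] at hc
      rw [← Nat.cast_sum, hc]
      push_cast
      ring
    have hP : pT n 1 * pF n 0 = 1 / 2 ^ n := by
      rw [show pT n 1 = pT n (0 + 1) from rfl, pT_succ, pF_sq]
      simp
    rw [hch, hP]
    have hpow : (2 : ℝ) ^ n = 2 * 2 ^ (n - 1) := by
      conv_lhs => rw [show n = (n - 1) + 1 by omega]
      ring
    rw [hpow]
    have : (2 : ℝ) ^ (n - 1) ≠ 0 := by positivity
    field_simp
  rw [show ((2 : ℂ)) * (((pT n 1 : ℝ) : ℂ) * ((pF n 0 : ℝ) : ℂ))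
      = ((2 * (pT n 1 * pF n 0) : ℝ) : ℂ) by push_cast; ring]
  rw [← Complex.ofReal_sub, hreal]
  push_cast
  ring
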